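/- Let S be a finite set and q : S × S → ℝ_{≥0} transition rates of an irreducible continuous-time Markov chain (q(x,x') > 0 allowed only for x ≠ x'). Suppose Kolmogorov's criterion holds: for every finite sequence x_1, x_2, …, x_n ∈ S, q(x_1,x_2) q(x_2,x_3) ⋯ q(x_{n-1},x_n) q(x_n,x_1) = q(x_n,x_{n-1}) ⋯ q(x_2,x_1) q(x_1,x_n). Then the (unique) stationary distribution π satisfies detailed balance: π(x) q(x,x') = π(x') q(x',x) for all x, x' ∈ S. -/

import Mathlib

open Finset

private lemma cycEq {S : Type*} (q : S → S → ℝ)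
    (hkol : ∀ (n : ℕ) (x : Fin (n + 1) → S),
      (∏ i, q (x i) (x (i + 1))) = ∏ i, q (x (i + 1)) (x i))
    (n : ℕ) (p : ℕ → S) :
    (∏ i ∈ range n, q (p i) (p (i+1))) * q (p n) (p 0)
      = (∏ i ∈ range n, q (p (i+1)) (p i)) * q (p 0) (p n) := by
  have h := hkol n (fun i => p i.val)
  rw [Fin.prod_univ_castSucc, Fin.prod_univ_castSucc] at h
  rw [← Fin.prod_univ_eq_prod_range (fun k => q (p k) (p (k+1))) n,
      ← Fin.prod_univ_eq_prod_range (fun k => q (p (k+1)) (p k)) n]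
  simpa [Fin.coeSucc_eq_succ, Fin.last_add_one] using h

private lemma closedWalk {S : Type*} (q : S → S → ℝ)
    (hkol : ∀ (n : ℕ) (x : Fin (n + 1) → S),
      (∏ i, q (x i) (x (i + 1))) = ∏ i, q (x (i + 1)) (x i))
    (n : ℕ) (p : ℕ → S) (hcl : p n = p 0) :
    (∏ i ∈ range n, q (p i) (p (i+1))) = ∏ i ∈ range n, q (p (i+1)) (p i) := by
  cases n with
  | zero => simp
  | succ k =>
    have h := cycEq q hkol k p
    rw [prod_range_succ, prod_range_succ, hcl]
    exact h

private lemma pathIndep {S : Type*} (q : S → S → ℝ)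
    (hkol : ∀ (n : ℕ) (x : Fin (n + 1) → S),
      (∏ i, q (x i) (x (i + 1))) = ∏ i, q (x (i + 1)) (x i))
    (n m : ℕ) (p r : ℕ → S) (h0 : p 0 = r 0) (h1 : p n = r m) :
    (∏ i ∈ range n, q (p i) (p (i+1))) * (∏ i ∈ range m, q (r (i+1)) (r i))
      = (∏ i ∈ range m, q (r i) (r (i+1))) * (∏ i ∈ range n, q (p (i+1)) (p i)) := by
  classical
  set c : ℕ → S := fun k => if k ≤ n then p k else r (n + m - k) with hc
  have hcp : ∀ k, k ≤ n → c k = p k := fun k hk => if_pos hk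
  have hcr : ∀ i, i ≤ m → c (n + i) = r (m - i) := by
    intro i hi
    rcases Nat.eq_zero_or_pos i with rfl | hip
    · rw [Nat.add_zero, hcp n le_rfl, h1, Nat.sub_zero]
    · have hni : ¬ (n + i ≤ n) := by omega
      simp only [hc, if_neg hni]
      congr 1
      omega
  have hclosed : c (n + m) = c 0 := by
    rw [hcr m le_rfl, hcp 0 (Nat.zero_le n), Nat.sub_self, h0]
  have hcw := closedWalk q hkol (n + m) c hclosed
  rw [prod_range_add, prod_range_add] at hcw
  have e1 : (∏ i ∈ range n, q (c i) (c (i+1))) = ∏ i ∈ range n, q (p i) (p (i+1)) :=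
    prod_congr rfl fun i hi => by
      have := mem_range.mp hi
      rw [hcp i (by omega), hcp (i+1) (by omega)]
  have e2 : (∏ i ∈ range n, q (c (i+1)) (c i)) = ∏ i ∈ range n, q (p (i+1)) (p i) :=
    prod_congr rfl fun i hi => by
      have := mem_range.mp hi
      rw [hcp i (by omega), hcp (i+1) (by omega)]
  have e3 : (∏ i ∈ range m, q (c (n + i)) (c (n + i + 1)))
      = ∏ i ∈ range m, q (r (i+1)) (r i) := by
    rw [← prod_range_reflect (fun i => q (r (i+1)) (r i)) m]
    refine prod_congr rfl fun j hj => ?_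
    have hjm := mem_range.mp hj
    have hA : c (n + j) = r (m - j) := hcr j (by omega)
    have hB : c (n + j + 1) = r (m - (j+1)) := by
      rw [Nat.add_assoc]; exact hcr (j+1) (by omega)
    have e4 : m - j = m - 1 - j + 1 := by omega
    have e5 : m - (j+1) = m - 1 - j := by omega
    rw [hA, hB, e4, e5]
  have e3' : (∏ i ∈ range m, q (c (n + i + 1)) (c (n + i)))
      = ∏ i ∈ range m, q (r i) (r (i+1)) := by
    rw [← prod_range_reflect (fun i => q (r i) (r (i+1))) m]
    refine prod_congr rfl fun j hj => ?_
    have hjm := mem_range.mp hj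
    have hA : c (n + j) = r (m - j) := hcr j (by omega)
    have hB : c (n + j + 1) = r (m - (j+1)) := by
      rw [Nat.add_assoc]; exact hcr (j+1) (by omega)
    have e4 : m - j = m - 1 - j + 1 := by omega
    have e5 : m - (j+1) = m - 1 - j := by omega
    rw [hA, hB, e4, e5]
  rw [e1, e2, e3, e3'] at hcw
  rw [hcw, mul_comm]

theorem kolmogorov_criterion_detailed_balance {S : Type*} [Fintype S]
    (q : S → S → ℝ) (hq : ∀ x y, 0 ≤ q x y) (hqd : ∀ x, q x x = 0)
    (hirr : ∀ x y : S, x ≠ y → ∃ (n : ℕ) (p : Fin (n + 1) → S),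
      p 0 = x ∧ p (Fin.last n) = y ∧ ∀ i : Fin n, 0 < q (p i.castSucc) (p i.succ))
    (hkol : ∀ (n : ℕ) (x : Fin (n + 1) → S),
      (∏ i, q (x i) (x (i + 1))) = ∏ i, q (x (i + 1)) (x i))
    (π : S → ℝ) (hπ0 : ∀ x, 0 ≤ π x) (hπ1 : ∑ x, π x = 1)
    (hstat : ∀ y, ∑ x, π x * q x y = π y * ∑ x, q y x) :
    ∀ x y, π x * q x y = π y * q y x := by
  classical
  have hpath : ∀ a b : S, ∃ (n : ℕ) (p : ℕ → S),
      p 0 = a ∧ p n = b ∧ ∀ i < n, 0 < q (p i) (p (i+1)) := by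
    intro a b
    rcases eq_or_ne a b with h | h
    · exact ⟨0, fun _ => a, rfl, h, fun i hi => absurd hi (by omega)⟩
    · obtain ⟨n, pf, hp0, hp1, hppos⟩ := hirr a b h
      refine ⟨n, fun k => if hk : k ≤ n then pf ⟨k, by omega⟩ else b, ?_, ?_, ?_⟩
      · simpa using hp0
      · exact (dif_pos le_rfl).trans hp1
      · intro i hi
        have h1 : i ≤ n := by omega
        have h2 : i + 1 ≤ n := by omega
        simp only [dif_pos h1, dif_pos h2]
        exact hppos ⟨i, hi⟩
  choose N P h0 h1 hpos using hpath
  -- positivity transfer along reversed edges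
  have hsign : ∀ a b : S, 0 < q a b → 0 < q b a := by
    intro a b hab
    rcases eq_or_ne a b with rfl | hne
    · rw [hqd a] at hab
      exact absurd hab (lt_irrefl 0)
    have key := cycEq q hkol (N b a) (P b a)
    rw [h0 b a, h1 b a] at key
    have hFpos : 0 < ∏ i ∈ range (N b a), q (P b a i) (P b a (i+1)) :=
      prod_pos fun i hi => hpos b a i (mem_range.mp hi)
    rcases (hq b a).eq_or_lt with h | h
    · exfalso
      rw [← h, mul_zero] at key
      exact absurd key (ne_of_gt (mul_pos hFpos hab))
    · exact h
  intro x y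
  -- weights relative to root x
  set Fw : S → ℝ := fun z => ∏ i ∈ range (N x z), q (P x z i) (P x z (i+1)) with hFw
  set Bw : S → ℝ := fun z => ∏ i ∈ range (N x z), q (P x z (i+1)) (P x z i) with hBw
  have hFpos : ∀ z, 0 < Fw z := fun z =>
    prod_pos fun i hi => hpos x z i (mem_range.mp hi)
  have hBpos : ∀ z, 0 < Bw z := fun z =>
    prod_pos fun i hi => hsign _ _ (hpos x z i (mem_range.mp hi))
  set μf : S → ℝ := fun z => Fw z / Bw z with hμf
  have hμpos : ∀ z, 0 < μf z := fun z => div_pos (hFpos z) (hBpos z)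
  -- reversibility of μf
  have hrev : ∀ a b : S, μf a * q a b = μf b * q b a := by
    intro a b
    rcases (hq a b).eq_or_lt with hab | hab
    · rcases (hq b a).eq_or_lt with hba | hba
      · rw [← hab, ← hba, mul_zero, mul_zero]
      · exact absurd (hsign b a hba) (by rw [← hab]; exact lt_irrefl 0)
    · set p' : ℕ → S := fun k => if k ≤ N x a then P x a k else b with hp'
      have hpc : ∀ k, k ≤ N x a → p' k = P x a k := fun k hk => if_pos hk
      have hp'0 : p' 0 = x := by rw [hpc 0 (Nat.zero_le _), h0]
      have hp'n : p' (N x a + 1) = b := by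
        simp only [hp', if_neg (by omega : ¬ (N x a + 1 ≤ N x a))]
      have key := pathIndep q hkol (N x a + 1) (N x b) p' (P x b)
        (by rw [hp'0, h0]) (by rw [hp'n, h1])
      rw [prod_range_succ, prod_range_succ] at key
      have e1 : (∏ i ∈ range (N x a), q (p' i) (p' (i+1))) = Fw a := by
        rw [hFw]
        exact prod_congr rfl fun i hi => by
          have := mem_range.mp hi
          rw [hpc i (by omega), hpc (i+1) (by omega)]
      have e2 : (∏ i ∈ range (N x a), q (p' (i+1)) (p' i)) = Bw a := by
        rw [hBw]
        exact prod_congr rfl fun i hi => by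
          have := mem_range.mp hi
          rw [hpc i (by omega), hpc (i+1) (by omega)]
      have ea : p' (N x a) = a := by rw [hpc _ le_rfl, h1]
      rw [e1, e2, ea, hp'n] at key
      -- key : Fw a * q a b * Bw b = Fw b * (Bw a * q b a)  (up to assoc)
      rw [hμf]
      have hba' : (Bw a) ≠ 0 := (hBpos a).ne'
      have hbb' : (Bw b) ≠ 0 := (hBpos b).ne'
      rw [div_mul_eq_mul_div, div_mul_eq_mul_div, div_eq_div_iff hba' hbb']
      linear_combination key
  -- maximum principle
  obtain ⟨y₀, -, hy₀⟩ := Finset.exists_max_image (univ : Finset S)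
    (fun z => π z / μf z) ⟨x, mem_univ x⟩
  have hstep : ∀ b : S, (∀ z : S, π z / μf z ≤ π b / μf b) →
      ∀ a : S, 0 < q a b → π a / μf a = π b / μf b := by
    intro b hmax a hab
    have hsum : ∑ z, (π b / μf b - π z / μf z) * (μf z * q z b) = 0 := by
      have h1' : ∑ z, (π b / μf b - π z / μf z) * (μf z * q z b)
          = (∑ z, π b * q b z) - ∑ z, π z * q z b := by
        rw [← Finset.sum_sub_distrib]
        refine Finset.sum_congr rfl fun z _ => ?_
        have e2 : π b * q b z = (π b / μf b) * (μf z * q z b) := by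
          rw [← hrev b z, ← mul_assoc, div_mul_cancel₀ _ (hμpos b).ne']
        have e3 : π z * q z b = (π z / μf z) * (μf z * q z b) := by
          rw [← mul_assoc, div_mul_cancel₀ _ (hμpos z).ne']
        rw [e2, e3]; ring
      rw [h1', ← Finset.mul_sum, ← hstat b, sub_self]
    have hnn : ∀ z ∈ (univ : Finset S), 0 ≤ (π b / μf b - π z / μf z) * (μf z * q z b) :=
      fun z _ => mul_nonneg (sub_nonneg.2 (hmax z)) (mul_nonneg (hμpos z).le (hq z b))
    have hterm := (Finset.sum_eq_zero_iff_of_nonneg hnn).mp hsum a (mem_univ a)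
    have h2 : μf a * q a b ≠ 0 := (mul_pos (hμpos a) hab).ne'
    have h3 := (mul_eq_zero.mp hterm).resolve_right h2
    exact (sub_eq_zero.mp h3).symm
  have hconst : ∀ z : S, π z / μf z = π y₀ / μf y₀ := by
    intro z
    have key : ∀ i : ℕ, i ≤ N z y₀ →
        π (P z y₀ (N z y₀ - i)) / μf (P z y₀ (N z y₀ - i)) = π y₀ / μf y₀ := by
      intro i
      induction i with
      | zero => intro _; rw [Nat.sub_zero, h1 z y₀]
      | succ k ih =>
        intro hk
        have hk' : k ≤ N z y₀ := by omega
        have hb := ih hk'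
        have hmaxb : ∀ w : S, π w / μf w
            ≤ π (P z y₀ (N z y₀ - k)) / μf (P z y₀ (N z y₀ - k)) :=
          fun w => (hy₀ w (mem_univ w)).trans hb.ge
        have hedge : 0 < q (P z y₀ (N z y₀ - (k+1))) (P z y₀ (N z y₀ - (k+1) + 1)) :=
          hpos z y₀ _ (by omega)
        have hj : N z y₀ - (k+1) + 1 = N z y₀ - k := by omega
        rw [hj] at hedge
        exact (hstep _ hmaxb _ hedge).trans hb
    have hz := key (N z y₀) le_rfl
    rwa [Nat.sub_self, h0 z y₀] at hz
  have hπμ : ∀ z : S, π z = (π y₀ / μf y₀) * μf z := by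
    intro z
    rw [← hconst z, div_mul_cancel₀ _ (hμpos z).ne']
  rw [hπμ x, hπμ y, mul_assoc, mul_assoc, hrev x y]
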